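/- Let r ≥ 1 and let c : X×X → ℝ_+ be a continuous semimetric of strong negative type on the compact Polish space X. Then for all probability measures μ, ν on X, DLOT_{r,c}(μ,ν) = 0 if and only if μ = ν. -/

import Mathlib

open MeasureTheory Filter
open scoped ENNReal NNReal BigOperators

noncomputable section

/-- `π` is a coupling of `μ` and `ν`. -/
def IsCoupling {X Y : Type*} [MeasurableSpace X] [MeasurableSpace Y]
    (μ : Measure X) (ν : Measure Y) (π : Measure (X × Y)) : Prop :=
  IsProbabilityMeasure π ∧ π.map Prod.fst = μ ∧ π.map Prod.snd = ν

/-- `π` is a coupling of `μ` and `ν` of nonnegative rank at most `r`, i.e. it can be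
written as `π = Σ_{i=1}^r λ_i μ_i ⊗ ν_i` with strictly positive weights `λ ∈ Δ_r^*`. -/
def IsLowRankCoupling {X Y : Type*} [MeasurableSpace X] [MeasurableSpace Y]
    (r : ℕ) (μ : Measure X) (ν : Measure Y) (π : Measure (X × Y)) : Prop :=
  IsCoupling μ ν π ∧
  ∃ (lam : Fin r → ℝ≥0) (μs : Fin r → Measure X) (νs : Fin r → Measure Y),
    (∀ i, 0 < lam i) ∧ (∑ i, lam i) = 1 ∧
    (∀ i, IsProbabilityMeasure (μs i)) ∧ (∀ i, IsProbabilityMeasure (νs i)) ∧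
    π = ∑ i, lam i • (μs i).prod (νs i)

/-- Optimal transport cost `OT_c(μ,ν)`. -/
def OT {X Y : Type*} [MeasurableSpace X] [MeasurableSpace Y]
    (c : X → Y → ℝ) (μ : Measure X) (ν : Measure Y) : ℝ :=
  sInf {t | ∃ π, IsCoupling μ ν π ∧ t = ∫ p, c p.1 p.2 ∂π}

/-- Low-rank optimal transport cost `LOT_{r,c}(μ,ν)`. -/
def LOT {X Y : Type*} [MeasurableSpace X] [MeasurableSpace Y]
    (r : ℕ) (c : X → Y → ℝ) (μ : Measure X) (ν : Measure Y) : ℝ :=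
  sInf {t | ∃ π, IsLowRankCoupling r μ ν π ∧ t = ∫ p, c p.1 p.2 ∂π}

/-- Debiased low-rank optimal transport `DLOT_{r,c}(μ,ν)`. -/
def DLOT {X : Type*} [MeasurableSpace X]
    (r : ℕ) (c : X → X → ℝ) (μ ν : Measure X) : ℝ :=
  LOT r c μ ν - (LOT r c μ μ + LOT r c ν ν) / 2

/-- The `k`-th dyadic entropy number of a subset `W` of a metric space:
the infimum of radii `ε` such that `W` is covered by `2^k` closed balls of radius `ε`. -/
def entropyNum {Z : Type*} [MetricSpace Z] (W : Set Z) (k : ℕ) : ℝ :=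
  sInf {ε : ℝ | 0 < ε ∧ ∃ z : Fin (2 ^ k) → Z, W ⊆ ⋃ i, Metric.closedBall (z i) ε}

/-- `c` is a semimetric of negative type: symmetric, vanishing exactly on the diagonal,
and `Σ_{i,j} α_i α_j c(x_i,x_j) ≤ 0` whenever `Σ_i α_i = 0`. -/
def IsSemimetricNegType {X : Type*} (c : X → X → ℝ) : Prop :=
  (∀ x y, c x y = c y x) ∧ (∀ x y, c x y = 0 ↔ x = y) ∧
  ∀ (n : ℕ), 2 ≤ n → ∀ (x : Fin n → X) (α : Fin n → ℝ), (∑ i, α i) = 0 →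
    ∑ i, ∑ j, α i * α j * c (x i) (x j) ≤ 0

/-- `c` is a semimetric of strong negative type: of negative type, and for all probability
measures `μ ≠ ν`, `∫ c d[μ−ν]⊗[μ−ν] < 0`, i.e.
`∫c dμ⊗μ + ∫c dν⊗ν − 2∫c dμ⊗ν < 0`. -/
def IsSemimetricStrongNegType {X : Type*} [MeasurableSpace X] (c : X → X → ℝ) : Prop :=
  IsSemimetricNegType c ∧
  ∀ μ ν : Measure X, IsProbabilityMeasure μ → IsProbabilityMeasure ν → μ ≠ ν →
    (∫ p, c p.1 p.2 ∂(μ.prod μ)) + (∫ p, c p.1 p.2 ∂(ν.prod ν))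
      - 2 * ∫ p, c p.1 p.2 ∂(μ.prod ν) < 0

section DLOTAux

set_option linter.unusedSectionVars false

variable {X : Type*} [MetricSpace X] [CompactSpace X]
  [MeasurableSpace X] [BorelSpace X]

def Jc (c : X → X → ℝ) (p q : Measure X) : ℝ := ∫ z, c z.1 z.2 ∂(p.prod q)

variable {c : X → X → ℝ}

lemma integrable_cost (hc : Continuous fun p : X × X => c p.1 p.2)
    (m : Measure (X × X)) [IsFiniteMeasure m] :
    Integrable (fun z : X × X => c z.1 z.2) m :=
  hc.integrable_of_hasCompactSupport (HasCompactSupport.of_compactSpace _)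

lemma isFiniteMeasure_finsetSum {ι : Type*} (s : Finset ι) (m : ι → Measure X)
    (h : ∀ i, IsFiniteMeasure (m i)) : IsFiniteMeasure (∑ i ∈ s, m i) := by
  constructor
  rw [Measure.finset_sum_apply]
  exact ENNReal.sum_lt_top.2 fun i _ => measure_lt_top _ _

lemma smul_measure_prod (a : ℝ≥0) (p q : Measure X) [IsFiniteMeasure p] [IsFiniteMeasure q] :
    (a • p).prod q = a • p.prod q := by
  refine Measure.prod_eq fun s t hs ht => ?_
  rw [Measure.smul_apply, Measure.smul_apply, Measure.prod_prod, ENNReal.smul_def, ENNReal.smul_def]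
  simp only [smul_eq_mul]
  ring

lemma measure_prod_smul (a : ℝ≥0) (p q : Measure X) [IsFiniteMeasure p] [IsFiniteMeasure q] :
    p.prod (a • q) = a • p.prod q := by
  refine Measure.prod_eq fun s t hs ht => ?_
  rw [Measure.smul_apply, Measure.smul_apply, Measure.prod_prod, ENNReal.smul_def, ENNReal.smul_def]
  simp only [smul_eq_mul]
  ring

lemma finsetSum_prod {ι : Type*} (s : Finset ι) (m : ι → Measure X)
    (h : ∀ i, IsFiniteMeasure (m i)) (q : Measure X) [IsFiniteMeasure q] :
    (∑ i ∈ s, m i).prod q = ∑ i ∈ s, (m i).prod q := by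
  classical
  induction s using Finset.induction_on with
  | empty => simp
  | @insert a s hnot ih =>
    haveI := h a
    haveI := isFiniteMeasure_finsetSum s m h
    rw [Finset.sum_insert hnot, Finset.sum_insert hnot, Measure.add_prod, ih]

lemma prod_finsetSum {ι : Type*} (s : Finset ι) (m : ι → Measure X)
    (h : ∀ i, IsFiniteMeasure (m i)) (q : Measure X) [IsFiniteMeasure q] :
    q.prod (∑ i ∈ s, m i) = ∑ i ∈ s, q.prod (m i) := by
  classical
  induction s using Finset.induction_on with
  | empty => simp
  | @insert a s hnot ih =>
    haveI := h a
    haveI := isFiniteMeasure_finsetSum s m h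
    rw [Finset.sum_insert hnot, Finset.sum_insert hnot, Measure.prod_add, ih]

lemma measure_map_finsetSum {ι α β : Type*} [MeasurableSpace α] [MeasurableSpace β]
    (s : Finset ι) (m : ι → Measure α) {f : α → β} (hf : Measurable f) :
    (∑ i ∈ s, m i).map f = ∑ i ∈ s, (m i).map f := by
  classical
  induction s using Finset.induction_on with
  | empty => simp
  | @insert a s hnot ih =>
    rw [Finset.sum_insert hnot, Finset.sum_insert hnot, Measure.map_add _ _ hf, ih]

lemma map_fst_decomp {r : ℕ} (lam : Fin r → ℝ≥0) (μs νs : Fin r → Measure X)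
    (hμ : ∀ i, IsProbabilityMeasure (μs i)) (hν : ∀ i, IsProbabilityMeasure (νs i)) :
    (∑ i, lam i • (μs i).prod (νs i)).map Prod.fst = ∑ i, lam i • μs i := by
  rw [measure_map_finsetSum _ _ measurable_fst]
  refine Finset.sum_congr rfl fun i _ => ?_
  haveI := hμ i; haveI := hν i
  rw [Measure.map_smul, Measure.map_fst_prod]
  simp

lemma map_snd_decomp {r : ℕ} (lam : Fin r → ℝ≥0) (μs νs : Fin r → Measure X)
    (hμ : ∀ i, IsProbabilityMeasure (μs i)) (hν : ∀ i, IsProbabilityMeasure (νs i)) :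
    (∑ i, lam i • (μs i).prod (νs i)).map Prod.snd = ∑ i, lam i • νs i := by
  rw [measure_map_finsetSum _ _ measurable_snd]
  refine Finset.sum_congr rfl fun i _ => ?_
  haveI := hμ i; haveI := hν i
  rw [Measure.map_smul, Measure.map_snd_prod]
  simp

lemma prob_decomp {r : ℕ} (lam : Fin r → ℝ≥0) (hsum : (∑ i, lam i) = 1)
    (ms : Fin r → Measure (X × X)) (h : ∀ i, IsProbabilityMeasure (ms i)) :
    IsProbabilityMeasure (∑ i, lam i • ms i) := by
  constructor
  rw [Measure.finset_sum_apply]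
  have : ∀ i : Fin r, (lam i • ms i) Set.univ = (lam i : ℝ≥0∞) := by
    intro i
    haveI := h i
    rw [Measure.smul_apply, measure_univ]; simp [ENNReal.smul_def]
  rw [Finset.sum_congr rfl fun i _ => this i, ← ENNReal.coe_finset_sum, hsum, ENNReal.coe_one]

lemma integral_decomp {r : ℕ} (hc : Continuous fun p : X × X => c p.1 p.2)
    (lam : Fin r → ℝ≥0) (ms : Fin r → Measure (X × X)) (h : ∀ i, IsFiniteMeasure (ms i)) :
    ∫ z, c z.1 z.2 ∂(∑ i, lam i • ms i) = ∑ i, (lam i : ℝ) * ∫ z, c z.1 z.2 ∂(ms i) := by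
  rw [integral_finset_sum_measure (fun i _ => by
    haveI := h i
    exact integrable_cost hc (lam i • ms i))]
  refine Finset.sum_congr rfl fun i _ => ?_
  rw [integral_smul_nnreal_measure]
  simp [NNReal.smul_def]

lemma Jc_add_left (hc : Continuous fun p : X × X => c p.1 p.2)
    (p p' q : Measure X) [IsFiniteMeasure p] [IsFiniteMeasure p'] [IsFiniteMeasure q] :
    Jc c (p + p') q = Jc c p q + Jc c p' q := by
  unfold Jc
  rw [Measure.add_prod, integral_add_measure (integrable_cost hc _) (integrable_cost hc _)]

lemma Jc_add_right (hc : Continuous fun p : X × X => c p.1 p.2)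
    (p q q' : Measure X) [IsFiniteMeasure p] [IsFiniteMeasure q] [IsFiniteMeasure q'] :
    Jc c p (q + q') = Jc c p q + Jc c p q' := by
  unfold Jc
  rw [Measure.prod_add, integral_add_measure (integrable_cost hc _) (integrable_cost hc _)]

lemma Jc_smul_left (a : ℝ≥0) (p q : Measure X) [IsFiniteMeasure p] [IsFiniteMeasure q] :
    Jc c (a • p) q = (a : ℝ) * Jc c p q := by
  unfold Jc
  rw [smul_measure_prod, integral_smul_nnreal_measure]
  simp [NNReal.smul_def]

lemma Jc_smul_right (a : ℝ≥0) (p q : Measure X) [IsFiniteMeasure p] [IsFiniteMeasure q] :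
    Jc c p (a • q) = (a : ℝ) * Jc c p q := by
  unfold Jc
  rw [measure_prod_smul, integral_smul_nnreal_measure]
  simp [NNReal.smul_def]

lemma Jc_symm (hc : Continuous fun p : X × X => c p.1 p.2) (hsymm : ∀ x y, c x y = c y x)
    (p q : Measure X) [IsFiniteMeasure p] [IsFiniteMeasure q] :
    Jc c p q = Jc c q p := by
  unfold Jc
  conv_rhs => rw [← Measure.prod_swap]
  rw [integral_map measurable_swap.aemeasurable
    (hc.aestronglyMeasurable (μ := (p.prod q).map Prod.swap))]
  refine integral_congr_ae (Eventually.of_forall fun z => ?_)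
  simp [hsymm z.1 z.2]

lemma Jc_sum_left {r : ℕ} (hc : Continuous fun p : X × X => c p.1 p.2)
    (lam : Fin r → ℝ≥0) (μs : Fin r → Measure X) (hμ : ∀ i, IsFiniteMeasure (μs i))
    (q : Measure X) [IsFiniteMeasure q] :
    Jc c (∑ i, lam i • μs i) q = ∑ i, (lam i : ℝ) * Jc c (μs i) q := by
  unfold Jc
  rw [finsetSum_prod _ _ (fun i => by haveI := hμ i; infer_instance) q]
  have : ∀ i : Fin r, (lam i • μs i).prod q = lam i • ((μs i).prod q) := by
    intro i; haveI := hμ i; exact smul_measure_prod _ _ _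
  rw [Finset.sum_congr rfl fun i _ => this i]
  exact integral_decomp hc lam _ fun i => by haveI := hμ i; infer_instance

lemma Jc_sum_right {r : ℕ} (hc : Continuous fun p : X × X => c p.1 p.2)
    (lam : Fin r → ℝ≥0) (νs : Fin r → Measure X) (hν : ∀ i, IsFiniteMeasure (νs i))
    (q : Measure X) [IsFiniteMeasure q] :
    Jc c q (∑ i, lam i • νs i) = ∑ i, (lam i : ℝ) * Jc c q (νs i) := by
  unfold Jc
  rw [prod_finsetSum _ _ (fun i => by haveI := hν i; infer_instance) q]
  have : ∀ i : Fin r, q.prod (lam i • νs i) = lam i • (q.prod (νs i)) := by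
    intro i; haveI := hν i; exact measure_prod_smul _ _ _
  rw [Finset.sum_congr rfl fun i _ => this i]
  exact integral_decomp hc lam _ fun i => by haveI := hν i; infer_instance

lemma key_le (hsneg : ∀ μ ν : Measure X, IsProbabilityMeasure μ → IsProbabilityMeasure ν →
      μ ≠ ν → (∫ p, c p.1 p.2 ∂(μ.prod μ)) + (∫ p, c p.1 p.2 ∂(ν.prod ν))
        - 2 * ∫ p, c p.1 p.2 ∂(μ.prod ν) < 0)
    (p q : Measure X) [hp : IsProbabilityMeasure p] [hq : IsProbabilityMeasure q] :
    Jc c p p + Jc c q q ≤ 2 * Jc c p q := by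
  by_cases h : p = q
  · subst h; linarith [le_refl (Jc c p p)]
  · have := hsneg p q hp hq h
    unfold Jc
    linarith

lemma prob_half_add (p q : Measure X) [IsProbabilityMeasure p] [IsProbabilityMeasure q] :
    IsProbabilityMeasure ((2⁻¹ : ℝ≥0) • p + (2⁻¹ : ℝ≥0) • q) := by
  constructor
  rw [Measure.add_apply, Measure.smul_apply, Measure.smul_apply, measure_univ, measure_univ]
  simp [ENNReal.smul_def]
  rw [ENNReal.inv_two_add_inv_two]

lemma pair_ineq (hc : Continuous fun p : X × X => c p.1 p.2) (hsymm : ∀ x y, c x y = c y x)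
    (hsneg : ∀ μ ν : Measure X, IsProbabilityMeasure μ → IsProbabilityMeasure ν →
      μ ≠ ν → (∫ p, c p.1 p.2 ∂(μ.prod μ)) + (∫ p, c p.1 p.2 ∂(ν.prod ν))
        - 2 * ∫ p, c p.1 p.2 ∂(μ.prod ν) < 0)
    (a b d e : Measure X) [IsProbabilityMeasure a] [IsProbabilityMeasure b]
    [IsProbabilityMeasure d] [IsProbabilityMeasure e] :
    -- a = μs i, b = νs i, d = μs j, e = νs j
    (2 * Jc c a e - Jc c a d - Jc c b e) + (2 * Jc c d b - Jc c d a - Jc c e b)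
      ≤ (2 * Jc c a b - Jc c a a - Jc c b b) + (2 * Jc c d e - Jc c d d - Jc c e e) := by
  set p : Measure X := (2⁻¹ : ℝ≥0) • a + (2⁻¹ : ℝ≥0) • e with hpdef
  set q : Measure X := (2⁻¹ : ℝ≥0) • d + (2⁻¹ : ℝ≥0) • b with hqdef
  haveI : IsProbabilityMeasure p := prob_half_add a e
  haveI : IsProbabilityMeasure q := prob_half_add d b
  have key := key_le hsneg p q
  have h2 : ((2⁻¹ : ℝ≥0) : ℝ) = 1/2 := by norm_num
  simp only [hpdef, hqdef, Jc_add_left hc, Jc_add_right hc, Jc_smul_left, Jc_smul_right, h2]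
    at key
  have s1 : Jc c e a = Jc c a e := Jc_symm hc hsymm e a
  have s2 : Jc c b d = Jc c d b := Jc_symm hc hsymm b d
  have s3 : Jc c d a = Jc c a d := Jc_symm hc hsymm d a
  have s4 : Jc c b e = Jc c e b := Jc_symm hc hsymm b e
  have s5 : Jc c b a = Jc c a b := Jc_symm hc hsymm b a
  have s6 : Jc c e d = Jc c d e := Jc_symm hc hsymm e d
  linarith

lemma jensen {r : ℕ} (hc : Continuous fun p : X × X => c p.1 p.2)
    (hsymm : ∀ x y, c x y = c y x)
    (hsneg : ∀ μ ν : Measure X, IsProbabilityMeasure μ → IsProbabilityMeasure ν →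
      μ ≠ ν → (∫ p, c p.1 p.2 ∂(μ.prod μ)) + (∫ p, c p.1 p.2 ∂(ν.prod ν))
        - 2 * ∫ p, c p.1 p.2 ∂(μ.prod ν) < 0)
    (lam : Fin r → ℝ≥0) (hsum : (∑ i, lam i) = 1)
    (μs νs : Fin r → Measure X) (hμ : ∀ i, IsProbabilityMeasure (μs i))
    (hν : ∀ i, IsProbabilityMeasure (νs i)) :
    2 * Jc c (∑ i, lam i • μs i) (∑ i, lam i • νs i)
      - Jc c (∑ i, lam i • μs i) (∑ i, lam i • μs i)
      - Jc c (∑ i, lam i • νs i) (∑ i, lam i • νs i)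
    ≤ ∑ i, (lam i : ℝ) *
        (2 * Jc c (μs i) (νs i) - Jc c (μs i) (μs i) - Jc c (νs i) (νs i)) := by
  classical
  set l : Fin r → ℝ := fun i => (lam i : ℝ) with hl
  have hl0 : ∀ i, 0 ≤ l i := fun i => (lam i).coe_nonneg
  have hsumR : (∑ i, l i) = 1 := by
    simp only [hl, ← NNReal.coe_sum, hsum, NNReal.coe_one]
  set A : Fin r → Fin r → ℝ := fun i j =>
    2 * Jc c (μs i) (νs j) - Jc c (μs i) (μs j) - Jc c (νs i) (νs j) with hA
  set E : Fin r → ℝ := fun i =>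
    2 * Jc c (μs i) (νs i) - Jc c (μs i) (μs i) - Jc c (νs i) (νs i) with hE
  -- expansion of Jc on convex combinations
  have expand : ∀ (ms ns : Fin r → Measure X), (∀ i, IsProbabilityMeasure (ms i)) →
      (∀ i, IsProbabilityMeasure (ns i)) →
      Jc c (∑ i, lam i • ms i) (∑ i, lam i • ns i)
        = ∑ i, ∑ j, l i * l j * Jc c (ms i) (ns j) := by
    intro ms ns hm hn
    haveI : IsFiniteMeasure (∑ i, lam i • ns i) :=
      isFiniteMeasure_finsetSum _ _ (fun i => by haveI := hn i; infer_instance)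
    rw [Jc_sum_left hc lam ms (fun i => by haveI := hm i; infer_instance)]
    refine Finset.sum_congr rfl fun i _ => ?_
    haveI := hm i
    rw [Jc_sum_right hc lam ns (fun j => by haveI := hn j; infer_instance), Finset.mul_sum]
    exact Finset.sum_congr rfl fun j _ => by ring
  have hLHS : 2 * Jc c (∑ i, lam i • μs i) (∑ i, lam i • νs i)
      - Jc c (∑ i, lam i • μs i) (∑ i, lam i • μs i)
      - Jc c (∑ i, lam i • νs i) (∑ i, lam i • νs i)
      = ∑ i, ∑ j, l i * l j * A i j := by
    rw [expand μs νs hμ hν, expand μs μs hμ hμ, expand νs νs hν hν, Finset.mul_sum,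
      ← Finset.sum_sub_distrib, ← Finset.sum_sub_distrib]
    refine Finset.sum_congr rfl fun i _ => ?_
    rw [Finset.mul_sum, ← Finset.sum_sub_distrib, ← Finset.sum_sub_distrib]
    refine Finset.sum_congr rfl fun j _ => ?_
    simp only [hA]
    ring
  have hgoalR : (∑ i, (lam i : ℝ) *
        (2 * Jc c (μs i) (νs i) - Jc c (μs i) (μs i) - Jc c (νs i) (νs i)))
      = ∑ i, l i * E i := rfl
  rw [hLHS, hgoalR]
  -- RHS double-sum identity
  have hR : ∑ i, ∑ j, l i * l j * ((E i + E j) / 2) = ∑ i, l i * E i := by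
    have inner : ∀ i, ∑ j, l i * l j * ((E i + E j) / 2)
        = l i * E i / 2 + l i / 2 * (∑ j, l j * E j) := by
      intro i
      rw [Finset.sum_congr rfl (fun j _ =>
        show l i * l j * ((E i + E j) / 2)
          = (l i * E i / 2) * l j + (l i / 2) * (l j * E j) by ring),
        Finset.sum_add_distrib, ← Finset.mul_sum, ← Finset.mul_sum, hsumR, mul_one]
    rw [Finset.sum_congr rfl fun i _ => inner i, Finset.sum_add_distrib]
    have h1 : ∑ i, l i * E i / 2 = (∑ i, l i * E i) / 2 := by
      rw [← Finset.sum_div]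
    have h2 : ∑ i, l i / 2 * (∑ j, l j * E j) = (∑ j, l j * E j) / 2 := by
      rw [← Finset.sum_mul, ← Finset.sum_div, hsumR]
      ring
    rw [h1, h2]
    ring
  -- symmetrization
  have hcomm : ∑ i, ∑ j, l j * l i * A j i = ∑ i, ∑ j, l i * l j * A i j := by
    rw [Finset.sum_comm]
  have hstep : ∑ i, ∑ j, (l i * l j * A i j + l j * l i * A j i)
      ≤ ∑ i, ∑ j, l i * l j * (E i + E j) := by
    refine Finset.sum_le_sum fun i _ => Finset.sum_le_sum fun j _ => ?_
    haveI := hμ i; haveI := hν i; haveI := hμ j; haveI := hν j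
    have hp := pair_ineq hc hsymm hsneg (μs i) (νs i) (μs j) (νs j)
    have h4 := mul_le_mul_of_nonneg_left hp (mul_nonneg (hl0 i) (hl0 j))
    simp only [hA, hE]
    nlinarith [h4]
  have hsplitA : ∑ i, ∑ j, (l i * l j * A i j + l j * l i * A j i)
      = (∑ i, ∑ j, l i * l j * A i j) + ∑ i, ∑ j, l j * l i * A j i := by
    rw [← Finset.sum_add_distrib]
    exact Finset.sum_congr rfl fun i _ => by rw [← Finset.sum_add_distrib]
  have hsplitE : ∑ i, ∑ j, l i * l j * (E i + E j)
      = 2 * ∑ i, ∑ j, l i * l j * ((E i + E j) / 2) := by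
    rw [Finset.mul_sum]
    refine Finset.sum_congr rfl fun i _ => ?_
    rw [Finset.mul_sum]
    exact Finset.sum_congr rfl fun j _ => by ring
  have final := hstep
  rw [hsplitA, hcomm, hsplitE, hR] at final
  linarith
lemma lot_bddBelow (hc0 : ∀ x y, 0 ≤ c x y) (r : ℕ) (μ ν : Measure X) :
    BddBelow {t | ∃ π, IsLowRankCoupling r μ ν π ∧ t = ∫ p, c p.1 p.2 ∂π} := by
  refine ⟨0, ?_⟩
  rintro t ⟨π, hπ, rfl⟩
  exact integral_nonneg fun z => hc0 _ _

lemma isCoupling_decomp {r : ℕ} (lam : Fin r → ℝ≥0) (hsum : (∑ i, lam i) = 1)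
    (μs νs : Fin r → Measure X) (hμ : ∀ i, IsProbabilityMeasure (μs i))
    (hν : ∀ i, IsProbabilityMeasure (νs i)) :
    IsCoupling (∑ i, lam i • μs i) (∑ i, lam i • νs i)
      (∑ i, lam i • (μs i).prod (νs i)) :=
  ⟨prob_decomp lam hsum _ (fun i => by haveI := hμ i; haveI := hν i; infer_instance),
   map_fst_decomp lam μs νs hμ hν, map_snd_decomp lam μs νs hμ hν⟩

lemma lot_nonempty (hc0 : ∀ x y, 0 ≤ c x y) {r : ℕ} (hr : 1 ≤ r)
    (μ ν : Measure X) [IsProbabilityMeasure μ] [IsProbabilityMeasure ν] :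
    Set.Nonempty {t | ∃ π, IsLowRankCoupling r μ ν π ∧ t = ∫ p, c p.1 p.2 ∂π} := by
  have hrne : (r : ℝ≥0) ≠ 0 := Nat.cast_ne_zero.mpr (by omega)
  set lam : Fin r → ℝ≥0 := fun _ => (r : ℝ≥0)⁻¹ with hlam
  have hsum : (∑ _i : Fin r, (r : ℝ≥0)⁻¹) = 1 := by
    rw [Finset.sum_const, Finset.card_univ, Fintype.card_fin, nsmul_eq_mul]
    exact mul_inv_cancel₀ hrne
  have hμeq : (∑ _i : Fin r, (r : ℝ≥0)⁻¹ • μ) = μ := by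
    rw [← Finset.sum_smul, hsum, one_smul]
  have hνeq : (∑ _i : Fin r, (r : ℝ≥0)⁻¹ • ν) = ν := by
    rw [← Finset.sum_smul, hsum, one_smul]
  refine ⟨∫ p, c p.1 p.2 ∂(∑ _i : Fin r, (r : ℝ≥0)⁻¹ • μ.prod ν),
    ⟨∑ _i : Fin r, (r : ℝ≥0)⁻¹ • μ.prod ν, ⟨?_, ?_⟩, rfl⟩⟩
  · have := isCoupling_decomp (fun _ : Fin r => (r : ℝ≥0)⁻¹) hsum (fun _ => μ) (fun _ => ν)
      (fun _ => inferInstance) (fun _ => inferInstance)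
    rwa [hμeq, hνeq] at this
  · exact ⟨fun _ => (r : ℝ≥0)⁻¹, fun _ => μ, fun _ => ν,
      fun _ => pos_iff_ne_zero.mpr (inv_ne_zero hrne), hsum,
      fun _ => inferInstance, fun _ => inferInstance, rfl⟩

lemma lot_key (hc : Continuous fun p : X × X => c p.1 p.2) (hc0 : ∀ x y, 0 ≤ c x y)
    (hsymm : ∀ x y, c x y = c y x)
    (hsneg : ∀ μ ν : Measure X, IsProbabilityMeasure μ → IsProbabilityMeasure ν →
      μ ≠ ν → (∫ p, c p.1 p.2 ∂(μ.prod μ)) + (∫ p, c p.1 p.2 ∂(ν.prod ν))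
        - 2 * ∫ p, c p.1 p.2 ∂(μ.prod ν) < 0)
    {r : ℕ} {μ ν : Measure X}
    [IsProbabilityMeasure μ] [IsProbabilityMeasure ν] {π : Measure (X × X)}
    (hπ : IsLowRankCoupling r μ ν π) :
    (LOT r c μ μ + LOT r c ν ν) / 2
      + (Jc c μ ν - (Jc c μ μ + Jc c ν ν) / 2) ≤ ∫ p, c p.1 p.2 ∂π := by
  obtain ⟨⟨hprob, hfst, hsnd⟩, lam, μs, νs, hpos, hsum, hμs, hνs, hdecomp⟩ := hπ
  have hm : (∑ i, lam i • μs i) = μ := by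
    rw [← hfst, hdecomp, map_fst_decomp lam μs νs hμs hνs]
  have hn : (∑ i, lam i • νs i) = ν := by
    rw [← hsnd, hdecomp, map_snd_decomp lam μs νs hμs hνs]
  have hint : ∫ p, c p.1 p.2 ∂π = ∑ i, (lam i : ℝ) * Jc c (μs i) (νs i) := by
    rw [hdecomp]
    exact integral_decomp hc lam _
      (fun i => by haveI := hμs i; haveI := hνs i; infer_instance)
  have hLOTμ : LOT r c μ μ ≤ ∑ i, (lam i : ℝ) * Jc c (μs i) (μs i) := by
    unfold LOT
    apply csInf_le (lot_bddBelow hc0 r μ μ)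
    refine ⟨∑ i, lam i • (μs i).prod (μs i),
      ⟨?_, lam, μs, μs, hpos, hsum, hμs, hμs, rfl⟩, ?_⟩
    · have := isCoupling_decomp lam hsum μs μs hμs hμs
      rwa [hm] at this
    · exact (integral_decomp hc lam _ (fun i => by haveI := hμs i; infer_instance)).symm
  have hLOTν : LOT r c ν ν ≤ ∑ i, (lam i : ℝ) * Jc c (νs i) (νs i) := by
    unfold LOT
    apply csInf_le (lot_bddBelow hc0 r ν ν)
    refine ⟨∑ i, lam i • (νs i).prod (νs i),
      ⟨?_, lam, νs, νs, hpos, hsum, hνs, hνs, rfl⟩, ?_⟩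
    · have := isCoupling_decomp lam hsum νs νs hνs hνs
      rwa [hn] at this
    · exact (integral_decomp hc lam _ (fun i => by haveI := hνs i; infer_instance)).symm
  have hjen := jensen hc hsymm hsneg lam hsum μs νs hμs hνs
  rw [hm, hn] at hjen
  have hexp : (∑ i, (lam i : ℝ) *
        (2 * Jc c (μs i) (νs i) - Jc c (μs i) (μs i) - Jc c (νs i) (νs i)))
      = 2 * (∑ i, (lam i : ℝ) * Jc c (μs i) (νs i))
        - (∑ i, (lam i : ℝ) * Jc c (μs i) (μs i))
        - (∑ i, (lam i : ℝ) * Jc c (νs i) (νs i)) := by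
    rw [Finset.mul_sum, ← Finset.sum_sub_distrib, ← Finset.sum_sub_distrib]
    exact Finset.sum_congr rfl fun i _ => by ring
  rw [hexp] at hjen
  rw [hint]
  linarith

end DLOTAux


/-- If `c` is a continuous semimetric of strong negative type then
`DLOT_{r,c}(μ,ν) = 0` iff `μ = ν`. -/
theorem dlot_eq_zero_iff {X : Type*}
    [MetricSpace X] [CompactSpace X] [Nonempty X] [MeasurableSpace X] [BorelSpace X]
    (c : X → X → ℝ) (hc_cont : Continuous fun p : X × X => c p.1 p.2)
    (hc_nonneg : ∀ x y, 0 ≤ c x y)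
    (hc_sneg : IsSemimetricStrongNegType c)
    (r : ℕ) (hr : 1 ≤ r)
    (μ ν : Measure X) [IsProbabilityMeasure μ] [IsProbabilityMeasure ν] :
    DLOT r c μ ν = 0 ↔ μ = ν := by
  constructor
  · intro h0
    by_contra hne
    have hsymm : ∀ x y, c x y = c y x := hc_sneg.1.1
    have hsneg2 := hc_sneg.2
    have hEpos : 0 < Jc c μ ν - (Jc c μ μ + Jc c ν ν) / 2 := by
      have := hsneg2 μ ν inferInstance inferInstance hne
      unfold Jc
      linarith
    have hbound : (LOT r c μ μ + LOT r c ν ν) / 2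
        + (Jc c μ ν - (Jc c μ μ + Jc c ν ν) / 2) ≤ LOT r c μ ν := by
      unfold LOT
      apply le_csInf (lot_nonempty hc_nonneg hr μ ν)
      rintro t ⟨π, hπ, rfl⟩
      exact lot_key hc_cont hc_nonneg hsymm hsneg2 hπ
    unfold DLOT at h0
    linarith
  · rintro rfl
    unfold DLOT
    ring


end
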